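/- Let k be a field of characteristic zero and let D be a derivation on a commutative k-algebra R that is locally nilpotent (for every r in R there exists n with D^n(r) = 0). If h lies in the kernel of D and there exist g in R and a positive integer n with D(g) = h^n, then in the localization R[1/h] there exists an element s with D(s) = 1, where D is extended to R[1/h] by the quotient rule. -/
import Mathlib


theorem stmt_0 {k R : Type*} [Field k] [CharZero k] [CommRing R] [Algebra k R]
    (D : Derivation k R R)
    (hln : ∀ r : R, ∃ n : ℕ, (⇑D)^[n] r = 0)
    (h : R) (hh : D h = 0)
    (g : R) (n : ℕ) (hn : 0 < n) (hg : D g = h ^ n)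
    (D' : Derivation k (Localization.Away h) (Localization.Away h))
    (hD' : ∀ r : R, D' (algebraMap R (Localization.Away h) r)
      = algebraMap R (Localization.Away h) (D r)) :
    ∃ s : Localization.Away h, D' s = 1 := by
  set f := algebraMap R (Localization.Away h) with hf
  set t : Localization.Away h := IsLocalization.Away.invSelf h ^ n with ht
  have hmul : f (h ^ n) * t = 1 := by
    rw [map_pow, ht, ← mul_pow, IsLocalization.Away.mul_invSelf, one_pow]
  have hDhn : D (h ^ n) = 0 := by
    rw [Derivation.leibniz_pow, hh]
    simp
  have hDt : D' t = 0 := by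
    have h0 : D' (f (h ^ n) * t) = 0 := by rw [hmul]; exact D'.map_one_eq_zero
    rw [Derivation.leibniz, hD', hDhn, map_zero, smul_zero, add_zero, smul_eq_mul] at h0
    have : t * (f (h ^ n) * D' t) = t * 0 := by rw [h0, mul_zero]
    rwa [← mul_assoc, mul_comm t, hmul, one_mul, mul_zero] at this
  refine ⟨f g * t, ?_⟩
  rw [Derivation.leibniz, hDt, smul_zero, zero_add, smul_eq_mul, hD', hg, mul_comm, hmul]
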